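/- arXiv:math/0510622 — 2 statements merged into one kernel-verified Lean document; each statement's English description precedes it below -/
import Mathlib

section
/- Let n ≥ 2, let T be a maximal element of Nil_k(Q_n), let A ∈ Q_n, and let α be a nonzero real number. Then A ∈ T if and only if α·A + (1-α)·O_n ∈ T. -/
namespace NilSg

variable {M : Type*}

/-- `T ⊆ M` is closed under multiplication. -/
def IsSubsg [Mul M] (T : Set M) : Prop :=
  ∀ ⦃a⦄, a ∈ T → ∀ ⦃b⦄, b ∈ T → a * b ∈ T

/-- Every product of exactly `k` elements of `T` equals `z`
(such products are the products of nonempty lists `a :: l` of elements of `T`). -/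
def ProdEq [Mul M] (z : M) (T : Set M) (k : ℕ) : Prop :=
  ∀ (a : M) (l : List M), a ∈ T → (∀ x ∈ l, x ∈ T) → l.length + 1 = k →
    l.foldl (· * ·) a = z

/-- `T` is a nilpotent subsemigroup with respect to the zero element `z`. -/
def IsNilSubsg [Mul M] (z : M) (T : Set M) : Prop :=
  IsSubsg T ∧ ∃ k, 0 < k ∧ ProdEq z T k

/-- The nilpotency class of `T`: the minimal `k ≥ 1` such that every product of `k`
elements of `T` equals `z`. -/
noncomputable def nilClass [Mul M] (z : M) (T : Set M) : ℕ :=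
  sInf {k | 0 < k ∧ ProdEq z T k}

/-- `T` is a nilpotent subsemigroup of `S` (with zero `z`). -/
def NilIn [Mul M] (z : M) (S : Set M) (T : Set M) : Prop :=
  T ⊆ S ∧ IsNilSubsg z T

/-- `T` is a nilpotent subsemigroup of `S` (with zero `z`) of nilpotency class at most `k`. -/
def NilLe [Mul M] (z : M) (S : Set M) (k : ℕ) (T : Set M) : Prop :=
  T ⊆ S ∧ IsNilSubsg z T ∧ nilClass z T ≤ k

/-- `Ω n`: the semigroup of `n × n` real matrices with nonnegative entries. -/
def Omega (n : ℕ) : Set (Matrix (Fin n) (Fin n) ℝ) :=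
  {A | ∀ i j, 0 ≤ A i j}

/-- `Q n`: the semigroup of `n × n` real matrices all of whose row sums and
column sums equal `1`. -/
def Qset (n : ℕ) : Set (Matrix (Fin n) (Fin n) ℝ) :=
  {A | (∀ i, ∑ j, A i j = 1) ∧ (∀ j, ∑ i, A i j = 1)}

/-- `D n`: the semigroup of `n × n` doubly stochastic real matrices. -/
def Dset (n : ℕ) : Set (Matrix (Fin n) (Fin n) ℝ) :=
  {A | (∀ i j, 0 ≤ A i j) ∧ (∀ i, ∑ j, A i j = 1) ∧ (∀ j, ∑ i, A i j = 1)}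

/-- The matrix all of whose entries equal `1/n`: the zero element of `Q n` and `D n`. -/
noncomputable def On (n : ℕ) : Matrix (Fin n) (Fin n) ℝ :=
  Matrix.of fun _ _ => (n : ℝ)⁻¹

/-- The hyperplane `V` of all vectors whose coordinates sum to `0`. -/
def Vsub (n : ℕ) : Submodule ℝ (Fin n → ℝ) where
  carrier := {x | ∑ i, x i = 0}
  add_mem' := by
    intro a b ha hb
    simp only [Set.mem_setOf_eq, Pi.add_apply] at *
    simp [Finset.sum_add_distrib, ha, hb]
  zero_mem' := by simp
  smul_mem' := by
    intro c x hx
    simp only [Set.mem_setOf_eq, Pi.smul_apply, smul_eq_mul] at *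
    simp [← Finset.mul_sum, hx]

lemma mul_On {n : ℕ} (B : Matrix (Fin n) (Fin n) ℝ) (hB : ∀ i, ∑ j, B i j = 1) :
    B * On n = On n := by
  ext i j
  simp [Matrix.mul_apply, On, ← Finset.sum_mul, hB]

lemma On_mul {n : ℕ} (B : Matrix (Fin n) (Fin n) ℝ) (hB : ∀ j, ∑ i, B i j = 1) :
    On n * B = On n := by
  ext i j
  simp [Matrix.mul_apply, On, ← Finset.mul_sum, hB]

lemma On_mem_Qset {n : ℕ} (hn : 0 < n) : On n ∈ Qset n := by
  have hne : (n : ℝ) ≠ 0 := Nat.cast_ne_zero.mpr hn.ne'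
  constructor <;> intro i <;> simp [On, Finset.sum_const, mul_inv_cancel₀ hne]

lemma scaled_mem_Qset {n : ℕ} (hn : 0 < n) {A : Matrix (Fin n) (Fin n) ℝ}
    (hA : A ∈ Qset n) (α : ℝ) : α • A + (1 - α) • On n ∈ Qset n := by
  have hne : (n : ℝ) ≠ 0 := Nat.cast_ne_zero.mpr hn.ne'
  obtain ⟨h1, h2⟩ := hA
  constructor <;> intro i <;>
    simp only [Matrix.add_apply, Matrix.smul_apply, On, Matrix.of_apply, smul_eq_mul] <;>
    rw [Finset.sum_add_distrib, ← Finset.mul_sum] <;>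
    [rw [h1]; rw [h2]] <;>
    simp [Finset.sum_const, nsmul_eq_mul] <;> field_simp <;> ring

lemma scaled_mul {n : ℕ} (hn : 0 < n) {B C : Matrix (Fin n) (Fin n) ℝ}
    (hB : B ∈ Qset n) (hC : C ∈ Qset n) (α β : ℝ) :
    (α • B + (1 - α) • On n) * (β • C + (1 - β) • On n)
      = (α * β) • (B * C) + (1 - α * β) • On n := by
  have h1 : B * On n = On n := mul_On B hB.1
  have h2 : On n * C = On n := On_mul C hC.2
  have h3 : On n * On n = On n := mul_On _ (On_mem_Qset hn).1
  simp only [Matrix.add_mul, Matrix.mul_add, Matrix.smul_mul, Matrix.mul_smul, h1, h2, h3]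
  module


/-- The set of all affine rescalings (towards `On n`) of elements of `T`. -/
def Tscaled (n : ℕ) (T : Set (Matrix (Fin n) (Fin n) ℝ)) : Set (Matrix (Fin n) (Fin n) ℝ) :=
  {B | ∃ (γ : ℝ) (C : Matrix (Fin n) (Fin n) ℝ), C ∈ T ∧ B = γ • C + (1 - γ) • On n}

lemma prodEq_succ {n : ℕ} {T : Set (Matrix (Fin n) (Fin n) ℝ)} (hTQ : T ⊆ Qset n)
    {m : ℕ} (hm : 0 < m) (h : ProdEq (On n) T m) : ProdEq (On n) T (m + 1) := by
  intro a l ha hl hlen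
  rcases List.eq_nil_or_concat l with rfl | ⟨l', x, rfl⟩
  · simp at hlen; omega
  · rw [List.concat_eq_append] at hl hlen ⊢
    rw [List.foldl_append]
    have hlen' : l'.length + 1 = m := by simpa using hlen
    have hfold : l'.foldl (· * ·) a = On n :=
      h a l' ha (fun y hy => hl y (List.mem_append_left _ hy)) hlen'
    have hx : x ∈ T := hl x (List.mem_append_right _ (List.mem_singleton_self x))
    simp only [List.foldl_cons, List.foldl_nil, hfold]
    exact On_mul x (hTQ hx).2

lemma prodEq_of_le {n : ℕ} {T : Set (Matrix (Fin n) (Fin n) ℝ)} (hTQ : T ⊆ Qset n)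
    {m k : ℕ} (hm : 0 < m) (h : ProdEq (On n) T m) (hmk : m ≤ k) : ProdEq (On n) T k := by
  induction k, hmk using Nat.le_induction with
  | base => exact h
  | succ k hk ih => exact prodEq_succ hTQ (lt_of_lt_of_le hm hk) ih

lemma foldl_scaled {n : ℕ} (hn : 0 < n) {T : Set (Matrix (Fin n) (Fin n) ℝ)}
    (hTQ : T ⊆ Qset n) (hsub : IsSubsg T) :
    ∀ (l : List (Matrix (Fin n) (Fin n) ℝ)), (∀ x ∈ l, x ∈ Tscaled n T) →
    ∀ (γ : ℝ) (A : Matrix (Fin n) (Fin n) ℝ), A ∈ T →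
    ∃ (δ : ℝ) (l' : List (Matrix (Fin n) (Fin n) ℝ)), (∀ x ∈ l', x ∈ T) ∧
      l'.length = l.length ∧
      l.foldl (· * ·) (γ • A + (1 - γ) • On n)
        = δ • (l'.foldl (· * ·) A) + (1 - δ) • On n := by
  intro l
  induction l with
  | nil => intro _ γ A _hA; exact ⟨γ, [], by simp, rfl, rfl⟩
  | cons x xs ih =>
    intro hmem γ A hA
    obtain ⟨β, B, hB, rfl⟩ := hmem x List.mem_cons_self
    have hprod : (γ • A + (1 - γ) • On n) * (β • B + (1 - β) • On n)
        = (γ * β) • (A * B) + (1 - γ * β) • On n :=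
      scaled_mul hn (hTQ hA) (hTQ hB) γ β
    obtain ⟨δ, l', hl', hlen, heq⟩ :=
      ih (fun y hy => hmem y (List.mem_cons_of_mem _ hy)) (γ * β) (A * B) (hsub hA hB)
    refine ⟨δ, B :: l', ?_, by simp [hlen], ?_⟩
    · intro y hy
      rcases List.mem_cons.mp hy with rfl | hy
      · exact hB
      · exact hl' y hy
    · simp only [List.foldl_cons, hprod, heq]

/-- If `T` is a maximal element of `Nil_k(Q_n)`, `A ∈ Q_n` and
`α ≠ 0`, then `A ∈ T` iff `α·A + (1-α)·O_n ∈ T`. -/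
theorem stmt16 (n k : ℕ) (hn : 2 ≤ n) (T : Set (Matrix (Fin n) (Fin n) ℝ))
    (hT : Maximal (NilLe (On n) (Qset n) k) T)
    (A : Matrix (Fin n) (Fin n) ℝ) (hA : A ∈ Qset n) (α : ℝ) (hα : α ≠ 0) :
    A ∈ T ↔ α • A + (1 - α) • On n ∈ T := by
  have hn0 : 0 < n := lt_of_lt_of_le two_pos hn
  obtain ⟨⟨hTQ, ⟨hsub, m, hm, hPm⟩, hclass⟩, hmax⟩ := hT
  -- the nilpotency class is attained and `ProdEq` holds at `k`
  have hne : {j | 0 < j ∧ ProdEq (On n) T j}.Nonempty := ⟨m, hm, hPm⟩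
  have hmem := Nat.sInf_mem hne
  have hk0 : 0 < k := lt_of_lt_of_le hmem.1 hclass
  have hPk : ProdEq (On n) T k := prodEq_of_le hTQ hmem.1 hmem.2 hclass
  -- `Tscaled n T` satisfies `NilLe`
  have hTsub : T ⊆ Tscaled n T := by
    intro B hB; exact ⟨1, B, hB, by simp⟩
  have hNil : NilLe (On n) (Qset n) k (Tscaled n T) := by
    refine ⟨?_, ⟨?_, k, hk0, ?_⟩, ?_⟩
    · rintro B ⟨γ, C, hC, rfl⟩
      exact scaled_mem_Qset hn0 (hTQ hC) γ
    · rintro B ⟨γ, C, hC, rfl⟩ B' ⟨γ', C', hC', rfl⟩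
      exact ⟨γ * γ', C * C', hsub hC hC', scaled_mul hn0 (hTQ hC) (hTQ hC') γ γ'⟩
    · rintro a l ⟨γ, C, hC, rfl⟩ hl hlen
      obtain ⟨δ, l', hl', hlen', heq⟩ := foldl_scaled hn0 hTQ hsub l hl γ C hC
      rw [heq, hPk C l' hC hl' (by omega)]
      module
    · apply Nat.sInf_le
      refine ⟨hk0, ?_⟩
      rintro a l ⟨γ, C, hC, rfl⟩ hl hlen
      obtain ⟨δ, l', hl', hlen', heq⟩ := foldl_scaled hn0 hTQ hsub l hl γ C hC
      rw [heq, hPk C l' hC hl' (by omega)]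
      module
  have hEq : Tscaled n T ⊆ T := hmax hNil hTsub
  constructor
  · intro hAT
    exact hEq ⟨α, A, hAT, rfl⟩
  · intro hBT
    have key : A = α⁻¹ • (α • A + (1 - α) • On n) + (1 - α⁻¹) • On n := by
      ext i j
      simp only [Matrix.add_apply, Matrix.smul_apply, On, Matrix.of_apply, smul_eq_mul]
      field_simp
      ring
    rw [key]
    exact hEq ⟨α⁻¹, _, hBT, rfl⟩


end NilSg
end

section
/- Let n ≥ 2 and 1 ≤ k ≤ n-1. The map sending a flag 0 = V_0 ⊊ V_1 ⊊ ⋯ ⊊ V_k = V of length k in V to the set {A ∈ D_n : A·V_i ⊆ V_{i-1} for all i = 1,…,k} is a bijection from the set of flags of length k in V onto the set of maximal elements of Nil_k(D_n). In particular, the maximal nilpotent subsemigroups of D_n correspond bijectively to complete flags 0 = V_0 ⊊ V_1 ⊊ ⋯ ⊊ V_{n-1} = V in V. -/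
namespace NilSg

variable {M : Type*}

section Basic

variable {n : ℕ}

abbrev Mat (n : ℕ) := Matrix (Fin n) (Fin n) ℝ

lemma mem_Vsub {x : Fin n → ℝ} : x ∈ Vsub n ↔ ∑ i, x i = 0 := Iff.rfl

lemma Dset_mul {A B : Mat n} (hA : A ∈ Dset n) (hB : B ∈ Dset n) : A * B ∈ Dset n := by
  obtain ⟨hA0, hAr, hAc⟩ := hA
  obtain ⟨hB0, hBr, hBc⟩ := hB
  refine ⟨fun i j => ?_, fun i => ?_, fun j => ?_⟩
  · rw [Matrix.mul_apply]
    exact Finset.sum_nonneg fun t _ => mul_nonneg (hA0 i t) (hB0 t j)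
  · rw [show ∀ i, ∑ j, (A * B) i j = ∑ j, ∑ t, A i t * B t j from fun i => rfl]
    rw [Finset.sum_comm]
    simp_rw [← Finset.mul_sum, hBr]
    simpa using hAr i
  · rw [show ∑ i, (A * B) i j = ∑ i, ∑ t, A i t * B t j from rfl]
    rw [Finset.sum_comm]
    simp_rw [← Finset.sum_mul, hAc]
    simpa using hBc j

lemma On_mem_Dset (hn : 0 < n) : On n ∈ Dset n := by
  have : (0:ℝ) ≤ (n:ℝ)⁻¹ := by positivity
  refine ⟨fun i j => this, fun i => ?_, fun j => ?_⟩ <;>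
  · simp [On, Finset.sum_const]
    rw [mul_inv_cancel₀]
    exact_mod_cast hn.ne'

lemma On_mul_s18 {A : Mat n} (hA : A ∈ Dset n) : On n * A = On n := by
  ext i j
  rw [Matrix.mul_apply]
  simp only [On, Matrix.of_apply]
  rw [← Finset.mul_sum, hA.2.2 j, mul_one]

lemma mul_On_s18 {A : Mat n} (hA : A ∈ Dset n) : A * On n = On n := by
  ext i j
  rw [Matrix.mul_apply]
  simp only [On, Matrix.of_apply]
  rw [← Finset.sum_mul, hA.2.1 i, one_mul]

lemma mulVec_mem_Vsub {A : Mat n} {x : Fin n → ℝ} (hA : A ∈ Dset n) (hx : x ∈ Vsub n) :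
    A.mulVec x ∈ Vsub n := by
  rw [mem_Vsub] at hx ⊢
  simp only [Matrix.mulVec, dotProduct]
  rw [Finset.sum_comm]
  simp_rw [← Finset.sum_mul, hA.2.2]
  simpa using hx

lemma On_mulVec {x : Fin n → ℝ} (hx : x ∈ Vsub n) : (On n).mulVec x = 0 := by
  funext i
  simp only [Matrix.mulVec, dotProduct, On, Matrix.of_apply, Pi.zero_apply]
  rw [← Finset.mul_sum, mem_Vsub.mp hx, mul_zero]

lemma eq_On {A : Mat n} (hn : 0 < n) (hA : A ∈ Dset n)
    (h : ∀ x ∈ Vsub n, A.mulVec x = 0) : A = On n := by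
  ext i j
  have hn' : (n:ℝ) ≠ 0 := by exact_mod_cast hn.ne'
  have hx : (Pi.single j 1 - fun _ => (n : ℝ)⁻¹ : Fin n → ℝ) ∈ Vsub n := by
    rw [mem_Vsub]
    simp only [Pi.sub_apply, Finset.sum_sub_distrib, Finset.sum_const, Finset.card_univ,
      Fintype.card_fin, nsmul_eq_mul]
    rw [mul_inv_cancel₀ hn']
    simp
  have := congrFun (h _ hx) i
  simp only [Matrix.mulVec, dotProduct, Pi.zero_apply, Pi.sub_apply] at this
  simp_rw [mul_sub] at this
  have h1 : ∑ t, A i t * (Pi.single j 1 : Fin n → ℝ) t = A i j := by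
    rw [Finset.sum_eq_single j] <;> simp +contextual [Pi.single_apply]
  have h2 : ∑ t, A i t * (n:ℝ)⁻¹ = (n:ℝ)⁻¹ := by
    rw [← Finset.sum_mul, hA.2.1 i, one_mul]
  rw [Finset.sum_sub_distrib, h1, h2, sub_eq_zero] at this
  simpa [On] using this

end Basic
section Lists

variable {n : ℕ}

lemma foldl_eq_prod (a : Mat n) (l : List (Mat n)) :
    l.foldl (· * ·) a = (a :: l).prod := by
  rw [List.prod_cons, List.prod_eq_foldl]
  have key : ∀ (t : List (Mat n)) (a : Mat n),
      List.foldl (· * ·) a t = a * List.foldl (· * ·) 1 t := by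
    intro t
    induction t with
    | nil => simp
    | cons b s ih =>
        intro a
        simp only [List.foldl_cons]
        rw [ih (a * b), ih (1 * b), one_mul, mul_assoc]
  exact key l a

lemma prod_mem_Dset : ∀ {l : List (Mat n)}, l ≠ [] → (∀ x ∈ l, x ∈ Dset n) → l.prod ∈ Dset n
  | [], h, _ => absurd rfl h
  | [a], _, hl => by simpa using hl a (by simp)
  | a :: b :: t, _, hl => by
      rw [List.prod_cons]
      exact Dset_mul (hl a (by simp))
        (prod_mem_Dset (by simp) fun x hx => hl x (List.mem_cons_of_mem a hx))

lemma foldl_On {l : List (Mat n)} (hl : ∀ x ∈ l, x ∈ Dset n) :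
    l.foldl (· * ·) (On n) = On n := by
  induction l with
  | nil => rfl
  | cons a t ih =>
      simp only [List.foldl_cons]
      rw [On_mul_s18 (hl a (by simp))]
      exact ih fun x hx => hl x (List.mem_cons_of_mem a hx)

lemma prodEq_of_le_s18 {T : Set (Mat n)} (hT : T ⊆ Dset n) {c k : ℕ} (hc : 0 < c)
    (h : ProdEq (On n) T c) (hck : c ≤ k) : ProdEq (On n) T k := by
  intro a l ha hl hlen
  have hc1 : c - 1 ≤ l.length := by omega
  rw [← List.take_append_drop (c - 1) l, List.foldl_append]
  have h1 : (l.take (c-1)).foldl (· * ·) a = On n := by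
    apply h a _ ha (fun x hx => hl x (List.mem_of_mem_take hx))
    rw [List.length_take]
    omega
  rw [h1]
  exact foldl_On fun x hx => hT (hl x (List.mem_of_mem_drop hx))

lemma prodEq_prod {T : Set (Mat n)} {k : ℕ} (h : ProdEq (On n) T k) {l : List (Mat n)}
    (hl : ∀ x ∈ l, x ∈ T) (hlen : l.length = k) (hk : 0 < k) : l.prod = On n := by
  match l, hlen with
  | a :: t, hlen =>
      rw [← foldl_eq_prod]
      exact h a t (hl a (by simp)) (fun x hx => hl x (List.mem_cons_of_mem a hx))
        (by simpa using hlen)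
  | [], hlen => exact absurd (hlen ▸ hk) (by simp)

end Lists
section RankOne

variable {n : ℕ}

/-- H1: realization of scaled rank-one maps inside `D n`. -/
lemma exists_rankOne (hn : 0 < n) (y c : Fin n → ℝ) (hy : ∑ i, y i = 0) (hc : ∑ j, c j = 0) :
    ∃ A ∈ Dset n, ∃ ε : ℝ, 0 < ε ∧
      ∀ x ∈ Vsub n, A.mulVec x = (ε * ∑ j, c j * x j) • y := by
  set S : ℝ := ∑ i, ∑ j, |y i * c j| with hS
  have hS0 : 0 ≤ S := Finset.sum_nonneg fun i _ => Finset.sum_nonneg fun j _ => abs_nonneg _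
  set ε : ℝ := ((n : ℝ) * (1 + S))⁻¹ with hε
  have hn' : (0:ℝ) < n := by exact_mod_cast hn
  have hεpos : 0 < ε := by positivity
  have hbound : ∀ i j, ε * |y i * c j| ≤ (n:ℝ)⁻¹ := by
    intro i j
    have h1 : |y i * c j| ≤ 1 + S := by
      have ha : |y i * c j| ≤ ∑ j', |y i * c j'| :=
        Finset.single_le_sum (f := fun j' => |y i * c j'|)
          (fun j' _ => abs_nonneg _) (Finset.mem_univ j)
      have hb : ∑ j', |y i * c j'| ≤ S :=
        Finset.single_le_sum (f := fun i' => ∑ j', |y i' * c j'|)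
          (fun i' _ => Finset.sum_nonneg fun j' _ => abs_nonneg _) (Finset.mem_univ i)
      linarith
    calc ε * |y i * c j| ≤ ε * (1 + S) := by
          exact mul_le_mul_of_nonneg_left h1 hεpos.le
      _ = (n:ℝ)⁻¹ := by
          rw [hε, mul_inv, mul_assoc, inv_mul_cancel₀ (by positivity)]
          simp
  refine ⟨On n + Matrix.of fun i j => ε * (y i * c j), ⟨?_, ?_, ?_⟩, ε, hεpos, ?_⟩
  · intro i j
    simp only [Matrix.add_apply, On, Matrix.of_apply]
    have := hbound i j
    have := neg_abs_le (y i * c j)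
    nlinarith [hεpos.le]
  · intro i
    simp only [Matrix.add_apply, On, Matrix.of_apply]
    rw [Finset.sum_add_distrib]
    simp_rw [← mul_assoc]
    rw [← Finset.mul_sum, hc, mul_zero, add_zero, Finset.sum_const, Finset.card_univ,
      Fintype.card_fin, nsmul_eq_mul, mul_inv_cancel₀ (by positivity)]
  · intro j
    simp only [Matrix.add_apply, On, Matrix.of_apply]
    rw [Finset.sum_add_distrib]
    have : ∑ i, ε * (y i * c j) = ε * (∑ i, y i) * c j := by
      rw [Finset.mul_sum, Finset.sum_mul]
      exact Finset.sum_congr rfl fun i _ => by ring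
    rw [this, hy, mul_zero, zero_mul, add_zero, Finset.sum_const, Finset.card_univ,
      Fintype.card_fin, nsmul_eq_mul, mul_inv_cancel₀ (by positivity)]
  · intro x hx
    funext i
    simp only [Matrix.mulVec, dotProduct, Matrix.add_apply, On, Matrix.of_apply,
      Pi.smul_apply, smul_eq_mul]
    rw [show ∀ f g : Fin n → ℝ, ∑ j, (f j + g j) * x j = ∑ j, f j * x j + ∑ j, g j * x j from
      fun f g => by rw [← Finset.sum_add_distrib]; congr 1; ext j; ring]
    rw [← Finset.mul_sum, mem_Vsub.mp hx, mul_zero, zero_add]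
    rw [Finset.mul_sum, Finset.sum_mul]
    exact Finset.sum_congr rfl fun j _ => by ring

/-- H2: a sum-zero dual vector vanishing on `U` and equal to `1` at `w`. -/
lemma exists_dual_vec (hn : 0 < n) {U : Submodule ℝ (Fin n → ℝ)} (hU : U ≤ Vsub n)
    {w : Fin n → ℝ} (hw : w ∈ Vsub n) (hwU : w ∉ U) :
    ∃ c : Fin n → ℝ, (∑ j, c j = 0) ∧ (∀ x ∈ U, ∑ j, c j * x j = 0) ∧ ∑ j, c j * w j = 1 := by
  set one : Fin n → ℝ := fun _ => 1 with hone
  set U' : Submodule ℝ (Fin n → ℝ) := U ⊔ Submodule.span ℝ {one} with hU'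
  have hwU' : w ∉ U' := by
    intro hmem
    rw [hU', Submodule.mem_sup] at hmem
    obtain ⟨u, hu, z, hz, huz⟩ := hmem
    rw [Submodule.mem_span_singleton] at hz
    obtain ⟨t, ht⟩ := hz
    have hsum : ∑ i, w i = ∑ i, u i + t * n := by
      rw [← huz, ← ht]
      simp only [Pi.add_apply, Pi.smul_apply, smul_eq_mul, hone, mul_one]
      rw [Finset.sum_add_distrib, Finset.sum_const, Finset.card_univ, Fintype.card_fin,
        nsmul_eq_mul, mul_comm]
    rw [mem_Vsub.mp hw, mem_Vsub.mp (hU hu)] at hsum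
    have ht0 : t = 0 := by
      have : t * n = 0 := by linarith
      rcases mul_eq_zero.mp this with h | h
      · exact h
      · exact absurd h (by exact_mod_cast hn.ne')
    apply hwU
    rw [← huz, ← ht, ht0, zero_smul, add_zero]
    exact hu
  obtain ⟨f, hf0, hfU'⟩ := U'.exists_dual_map_eq_bot_of_notMem hwU' inferInstance
  set g : Module.Dual ℝ (Fin n → ℝ) := (f w)⁻¹ • f with hg
  have hgw : g w = 1 := by
    simp [hg, inv_mul_cancel₀ hf0]
  have hgU' : ∀ x ∈ U', g x = 0 := by
    intro x hx
    have : f x = 0 := by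
      have : f x ∈ U'.map f := Submodule.mem_map_of_mem hx
      rwa [hfU', Submodule.mem_bot] at this
    simp [hg, this]
  set e : Fin n → (Fin n → ℝ) := fun j => fun j1 => if j = j1 then 1 else 0 with he
  have key : ∀ v : Fin n → ℝ, ∑ j, g (e j) * v j = g v := by
    intro v
    conv_rhs => rw [pi_eq_sum_univ v, map_sum]
    refine Finset.sum_congr rfl fun j _ => ?_
    rw [map_smul]
    simp [mul_comm]
    exact Or.inl rfl
  refine ⟨fun j => g (e j), ?_, ?_, ?_⟩
  · have hone' : one ∈ U' := Submodule.mem_sup_right (Submodule.mem_span_singleton_self one)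
    have h1 := hgU' one hone'
    have : ∑ j, g (e j) * one j = g one := key one
    simp only [hone, mul_one] at this
    rw [this, h1]
  · intro x hx
    rw [key x]
    exact hgU' x (Submodule.mem_sup_left hx)
  · rw [key w, hgw]

end RankOne
section Chain

variable {n k : ℕ}

/-- A strict chain of length `k` in the hyperplane `Vsub n`, indexed by `ℕ`
(constant equal to `Vsub n` from `k` on). -/
structure Chain (n k : ℕ) where
  G : ℕ → Submodule ℝ (Fin n → ℝ)
  bot : G 0 = ⊥
  top : ∀ m, k ≤ m → G m = Vsub n
  mono : Monotone G
  strict : ∀ m, m < k → G m < G (m + 1)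

/-- The nilpotent subsemigroup attached to a chain. -/
def TFn (C : ℕ → Submodule ℝ (Fin n → ℝ)) : Set (Mat n) :=
  {A | A ∈ Dset n ∧ ∀ m, ∀ x ∈ C (m + 1), A.mulVec x ∈ C m}

namespace Chain

variable (C : Chain n k)

lemma le_V (m : ℕ) : C.G m ≤ Vsub n := by
  have h1 : C.G m ≤ C.G (max m k) := C.mono (le_max_left m k)
  rwa [C.top _ (le_max_right m k)] at h1

lemma drop {A : Mat n} (hA : A ∈ TFn C.G) {x : Fin n → ℝ} {m : ℕ} (hx : x ∈ C.G m) :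
    A.mulVec x ∈ C.G (m - 1) := by
  cases m with
  | zero =>
      rw [C.bot, Submodule.mem_bot] at hx
      subst hx
      rw [Matrix.mulVec_zero]
      simp
  | succ m => exact hA.2 m x hx

lemma weak_drop {A : Mat n} (hA : A ∈ TFn C.G) {x : Fin n → ℝ} {m : ℕ} (hx : x ∈ C.G m) :
    A.mulVec x ∈ C.G m :=
  C.mono (Nat.sub_le m 1) (C.drop hA hx)

lemma prod_drop (l : List (Mat n)) (hl : ∀ X ∈ l, X ∈ TFn C.G)
    {m : ℕ} {x : Fin n → ℝ} (hx : x ∈ C.G m) : l.prod.mulVec x ∈ C.G (m - l.length) := by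
  induction l generalizing m x with
  | nil => simpa [Matrix.one_mulVec] using hx
  | cons A t ih =>
      rw [List.prod_cons, ← Matrix.mulVec_mulVec]
      have ht : t.prod.mulVec x ∈ C.G (m - t.length) :=
        ih (fun X hX => hl X (List.mem_cons_of_mem A hX)) hx
      have := C.drop (hl A (by simp)) ht
      rwa [List.length_cons, show m - (t.length + 1) = m - t.length - 1 by omega]

lemma subsg : IsSubsg (TFn C.G) := by
  intro A hA B hB
  refine ⟨Dset_mul hA.1 hB.1, fun m x hx => ?_⟩
  rw [← Matrix.mulVec_mulVec]
  exact C.weak_drop hA (hB.2 m x hx)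

lemma prodEq (hn : 0 < n) (hk : 0 < k) : ProdEq (On n) (TFn C.G) k := by
  intro a l ha hl hlen
  rw [foldl_eq_prod]
  have hmem : ∀ X ∈ a :: l, X ∈ TFn C.G := by
    intro X hX
    rcases List.mem_cons.mp hX with h | h
    · exact h ▸ ha
    · exact hl X h
  apply eq_On hn (prod_mem_Dset (by simp) fun X hX => (hmem X hX).1)
  intro x hx
  have hx' : x ∈ C.G k := by rw [C.top k le_rfl]; exact hx
  have := C.prod_drop (a :: l) hmem hx'
  rw [List.length_cons, hlen] at this
  rw [show k - k = 0 by omega, C.bot, Submodule.mem_bot] at this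
  exact this

lemma nilLe (hn : 0 < n) (hk : 0 < k) : NilLe (On n) (Dset n) k (TFn C.G) := by
  refine ⟨fun A hA => hA.1, ⟨C.subsg, k, hk, C.prodEq hn hk⟩, Nat.sInf_le ⟨hk, C.prodEq hn hk⟩⟩

end Chain

end Chain
namespace Chain

variable {n k : ℕ} (C : Chain n k)

lemma exists_rankOne_TFn (hn : 0 < n) (p : ℕ) {y : Fin n → ℝ} (hy : y ∈ C.G p)
    {c : Fin n → ℝ} (hc0 : ∑ j, c j = 0) (hcV : ∀ x ∈ C.G p, ∑ j, c j * x j = 0) :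
    ∃ A ∈ TFn C.G, ∃ ε : ℝ, 0 < ε ∧
      ∀ x ∈ Vsub n, A.mulVec x = (ε * ∑ j, c j * x j) • y := by
  obtain ⟨A, hAD, ε, hε, hAx⟩ := exists_rankOne hn y c (mem_Vsub.mp (C.le_V p hy)) hc0
  refine ⟨A, ⟨hAD, fun m x hx => ?_⟩, ε, hε, hAx⟩
  have hxV : x ∈ Vsub n := C.le_V (m + 1) hx
  rw [hAx x hxV]
  rcases le_or_gt (m + 1) p with h | h
  · rw [hcV x (C.mono h hx), mul_zero, zero_smul]
    exact Submodule.zero_mem _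
  · exact Submodule.smul_mem _ _ (C.mono (by omega) hy)

lemma exists_lift (hn : 0 < n) {i : ℕ} {v : Fin n → ℝ} (hv : v ∈ C.G i) :
    ∀ j, i ≤ j → j ≤ k → ∃ l : List (Mat n), (∀ X ∈ l, X ∈ TFn C.G) ∧ l.length = j - i ∧
      ∃ s : ℝ, 0 < s ∧ ∃ w ∈ C.G j, l.prod.mulVec w = s • v := by
  intro j hij
  induction j, hij using Nat.le_induction with
  | base =>
      intro _
      exact ⟨[], by simp, by simp, 1, one_pos, v, hv, by simp [Matrix.one_mulVec]⟩
  | succ j hij ih =>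
      intro hjk
      obtain ⟨l, hl, hlen, s, hs, w, hw, hprod⟩ := ih (by omega)
      obtain ⟨w', hw'1, hw'2⟩ := SetLike.exists_of_lt (C.strict j (by omega))
      obtain ⟨c, hc0, hcU, hcw'⟩ := exists_dual_vec hn (C.le_V j)
        (mem_Vsub.mp (C.le_V (j+1) hw'1)) hw'2
      obtain ⟨A, hA, ε, hε, hAx⟩ := C.exists_rankOne_TFn hn j hw hc0 hcU
      refine ⟨l ++ [A], ?_, by simp [hlen]; omega, ε * s, by positivity, w', hw'1, ?_⟩
      · intro X hX
        rcases List.mem_append.mp hX with h | h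
        · exact hl X h
        · rw [List.mem_singleton.mp h]; exact hA
      · rw [List.prod_append, List.prod_singleton, ← Matrix.mulVec_mulVec,
          hAx w' (C.le_V (j+1) hw'1), hcw', mul_one, Matrix.mulVec_smul, hprod,
          smul_smul]

lemma exists_lower (hn : 0 < n) : ∀ i, i ≤ k → ∀ u, u ∈ Vsub n → u ∉ C.G i →
    ∃ l : List (Mat n), (∀ X ∈ l, X ∈ TFn C.G) ∧ l.length = i ∧ l.prod.mulVec u ≠ 0 := by
  intro i
  induction i with
  | zero =>
      intro _ u hu hu0
      refine ⟨[], by simp, rfl, ?_⟩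
      rw [List.prod_nil, Matrix.one_mulVec]
      intro h
      exact hu0 (by rw [h, C.bot]; simp)
  | succ i ih =>
      intro hik u hu hui
      obtain ⟨z, hz1, hz2⟩ := SetLike.exists_of_lt (C.strict i (by omega))
      obtain ⟨c, hc0, hcU, hcu⟩ := exists_dual_vec hn (C.le_V (i+1)) hu hui
      obtain ⟨A, hA, ε, hε, hAx⟩ := C.exists_rankOne_TFn hn (i+1) hz1 hc0 hcU
      obtain ⟨l, hl, hlen, hprod⟩ := ih (by omega) z (mem_Vsub.mp (C.le_V (i+1) hz1)) hz2
      refine ⟨l ++ [A], ?_, by simp [hlen], ?_⟩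
      · intro X hX
        rcases List.mem_append.mp hX with h | h
        · exact hl X h
        · rw [List.mem_singleton.mp h]; exact hA
      · rw [List.prod_append, List.prod_singleton, ← Matrix.mulVec_mulVec,
          hAx u hu, hcu, mul_one, Matrix.mulVec_smul]
        exact smul_ne_zero hε.ne' hprod

lemma tfn_maximal (hn : 0 < n) (hk : 0 < k) :
    Maximal (NilLe (On n) (Dset n) k) (TFn C.G) := by
  refine ⟨C.nilLe hn hk, ?_⟩
  intro T' hT' hsub B hB
  refine ⟨hT'.1 hB, fun m x hx => ?_⟩
  rcases le_or_gt k m with hmk | hmk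
  · rw [C.top m hmk]
    exact mulVec_mem_Vsub (hT'.1 hB) (C.le_V (m+1) hx)
  by_contra hBx
  have hxV : x ∈ Vsub n := C.le_V (m+1) hx
  have hBxV : B.mulVec x ∈ Vsub n := mulVec_mem_Vsub (hT'.1 hB) hxV
  obtain ⟨l₂, hl₂, hlen₂, hprod₂⟩ := C.exists_lower hn m (by omega) (B.mulVec x) hBxV hBx
  obtain ⟨l₁, hl₁, hlen₁, s, hs, w, hw, hprod₁⟩ :=
    C.exists_lift hn hx k (by omega) le_rfl
  set L : List (Mat n) := l₂ ++ B :: l₁ with hL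
  have hLlen : L.length = k := by simp [hL, hlen₁, hlen₂]; omega
  have hLmem : ∀ X ∈ L, X ∈ T' := by
    intro X hX
    rcases List.mem_append.mp hX with h | h
    · exact hsub (hl₂ X h)
    · rcases List.mem_cons.mp h with h' | h'
      · exact h' ▸ hB
      · exact hsub (hl₁ X h')
  have hc₀ : nilClass (On n) T' ∈ {c | 0 < c ∧ ProdEq (On n) T' c} := by
    apply Nat.sInf_mem
    obtain ⟨k₀, hk₀, hpk₀⟩ := hT'.2.1.2
    exact ⟨k₀, hk₀, hpk₀⟩
  have hPk : ProdEq (On n) T' k :=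
    prodEq_of_le_s18 hT'.1 hc₀.1 hc₀.2 (le_trans hT'.2.2 le_rfl)
  have hLprod : L.prod = On n := prodEq_prod hPk hLmem hLlen hk
  have hcomp : L.prod.mulVec w = s • (l₂.prod.mulVec (B.mulVec x)) := by
    rw [hL, List.prod_append, List.prod_cons, ← mul_assoc, ← Matrix.mulVec_mulVec,
      ← Matrix.mulVec_mulVec, hprod₁, Matrix.mulVec_smul, Matrix.mulVec_smul]
  have hwV : w ∈ Vsub n := C.le_V k hw
  rw [hLprod, On_mulVec hwV] at hcomp
  exact smul_ne_zero hs.ne' hprod₂ hcomp.symm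

lemma char (hn : 0 < n) {i : ℕ} (hik : i ≤ k) (v : Fin n → ℝ) :
    v ∈ C.G i ↔ v ∈ Vsub n ∧ ∀ l : List (Mat n), (∀ X ∈ l, X ∈ TFn C.G) → l.length = i →
      l.prod.mulVec v = 0 := by
  constructor
  · intro hv
    refine ⟨C.le_V i hv, fun l hl hlen => ?_⟩
    have := C.prod_drop l hl hv
    rwa [hlen, Nat.sub_self, C.bot, Submodule.mem_bot] at this
  · rintro ⟨hvV, hvl⟩
    by_contra hvi
    obtain ⟨l, hl, hlen, hprod⟩ := C.exists_lower hn i hik v hvV hvi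
    exact hprod (hvl l hl hlen)

end Chain
section Flag

variable {n k : ℕ}

/-- The map from flags to subsemigroups, as in the statement. -/
def Phi (F : Fin (k + 1) → Submodule ℝ (Fin n → ℝ)) : Set (Mat n) :=
  {A | A ∈ Dset n ∧ ∀ i : Fin k, ∀ x ∈ F i.succ, A.mulVec x ∈ F i.castSucc}

def chainOf (F : Fin (k + 1) → Submodule ℝ (Fin n → ℝ)) : ℕ → Submodule ℝ (Fin n → ℝ) :=
  fun m => F ⟨min m k, by omega⟩

/-- A flag gives a `Chain`. -/
def mkChain (F : Fin (k + 1) → Submodule ℝ (Fin n → ℝ))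
    (h0 : F 0 = ⊥) (hlast : F (Fin.last k) = Vsub n) (hmono : StrictMono F) : Chain n k where
  G := chainOf F
  bot := by
    have : (⟨min 0 k, by omega⟩ : Fin (k+1)) = 0 := by
      apply Fin.ext; simp
    rw [chainOf, this, h0]
  top := by
    intro m hm
    have : (⟨min m k, by omega⟩ : Fin (k+1)) = Fin.last k := by
      apply Fin.ext; simp [Fin.last]; omega
    rw [chainOf, this, hlast]
  mono := by
    intro a b hab
    exact hmono.monotone (Fin.mk_le_mk.mpr (by omega))
  strict := by
    intro m hm
    exact hmono (Fin.mk_lt_mk.mpr (by omega))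

lemma phi_eq_TFn (F : Fin (k + 1) → Submodule ℝ (Fin n → ℝ))
    (h0 : F 0 = ⊥) (hlast : F (Fin.last k) = Vsub n) (hmono : StrictMono F) :
    Phi F = TFn (mkChain F h0 hlast hmono).G := by
  have hsucc : ∀ i : Fin k, F i.succ = chainOf F (i.val + 1) := by
    intro i
    congr 1
    apply Fin.ext
    simp only [chainOf, Fin.val_succ]
    omega
  have hcast : ∀ i : Fin k, F i.castSucc = chainOf F i.val := by
    intro i
    congr 1
    apply Fin.ext
    simp only [chainOf, Fin.coe_castSucc]
    omega
  have hG : (mkChain F h0 hlast hmono).G = chainOf F := rfl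
  ext A
  constructor
  · rintro ⟨hAD, hA⟩
    refine ⟨hAD, fun m x hx => ?_⟩
    rw [hG] at hx ⊢
    rcases lt_or_ge m k with hmk | hmk
    · have := hA ⟨m, hmk⟩ x (by rw [hsucc ⟨m, hmk⟩]; exact hx)
      rwa [hcast ⟨m, hmk⟩] at this
    · have htopm : chainOf F m = Vsub n := (mkChain F h0 hlast hmono).top m hmk
      have htopm1 : chainOf F (m+1) = Vsub n :=
        (mkChain F h0 hlast hmono).top (m+1) (by omega)
      rw [htopm]
      exact mulVec_mem_Vsub hAD (by rwa [htopm1] at hx)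
  · rintro ⟨hAD, hA⟩
    refine ⟨hAD, fun i x hx => ?_⟩
    rw [hcast i]
    have := hA i.val x (by rw [hG, ← hsucc i]; exact hx)
    rwa [hG] at this

end Flag
section WChain

variable {n k : ℕ}

/-- The summation functional. -/
def sumLin (n : ℕ) : (Fin n → ℝ) →ₗ[ℝ] ℝ where
  toFun := fun x => ∑ i, x i
  map_add' := by intro a b; simp [Finset.sum_add_distrib]
  map_smul' := by intro c x; simp [Finset.mul_sum]

lemma Vsub_eq_ker : Vsub n = LinearMap.ker (sumLin n) := by
  ext x
  simp [mem_Vsub, sumLin, LinearMap.mem_ker]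

lemma finrank_Vsub (hn : 1 ≤ n) : Module.finrank ℝ (Vsub n) = n - 1 := by
  have hsurj : Function.Surjective (sumLin n) := by
    intro r
    refine ⟨fun _ => r / n, ?_⟩
    simp only [sumLin, LinearMap.coe_mk, AddHom.coe_mk]
    rw [Finset.sum_const, Finset.card_univ, Fintype.card_fin, nsmul_eq_mul]
    field_simp
  have h1 : Module.finrank ℝ (LinearMap.range (sumLin n)) = 1 := by
    rw [LinearMap.range_eq_top.mpr hsurj, finrank_top, Module.finrank_self]
  have h2 := LinearMap.finrank_range_add_finrank_ker (sumLin n)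
  rw [h1, Module.finrank_fintype_fun_eq_card, Fintype.card_fin] at h2
  rw [Vsub_eq_ker]
  omega

/-- The canonical kernel chain of `T`. -/
def Wc (T : Set (Mat n)) : ℕ → Submodule ℝ (Fin n → ℝ)
  | 0 => ⊥
  | (i+1) => Vsub n ⊓ ⨅ A ∈ T, (Wc T i).comap (Matrix.mulVecLin A)

variable {T : Set (Mat n)}

lemma mem_Wc_succ {i : ℕ} {v : Fin n → ℝ} :
    v ∈ Wc T (i+1) ↔ v ∈ Vsub n ∧ ∀ A ∈ T, A.mulVec v ∈ Wc T i := by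
  simp [Wc, Submodule.mem_inf, Submodule.mem_iInf, Submodule.mem_comap,
    Matrix.mulVecLin_apply]

lemma Wc_le_V : ∀ i, Wc T i ≤ Vsub n
  | 0 => bot_le
  | (i+1) => inf_le_left

lemma Wc_le_succ : ∀ i, Wc T i ≤ Wc T (i+1)
  | 0 => bot_le
  | (i+1) => by
      intro v hv
      rw [mem_Wc_succ] at hv ⊢
      exact ⟨hv.1, fun A hA => Wc_le_succ i (hv.2 A hA)⟩

lemma Wc_mono : Monotone (Wc T) := monotone_nat_of_le_succ Wc_le_succ

lemma Wc_stab {i : ℕ} (h : Wc T i = Wc T (i+1)) : ∀ j, i ≤ j → Wc T j = Wc T i := by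
  intro j hj
  induction j, hj using Nat.le_induction with
  | base => rfl
  | succ j hij ih =>
      have : Wc T (j+1) = Wc T (i+1) := by
        ext v
        rw [mem_Wc_succ, mem_Wc_succ, ih]
      rw [this, ← h]

lemma Wc_char (hT : T ⊆ Dset n) : ∀ (i : ℕ) (v : Fin n → ℝ),
    v ∈ Wc T i ↔ v ∈ Vsub n ∧ ∀ l : List (Mat n), (∀ X ∈ l, X ∈ T) → l.length = i →
      l.prod.mulVec v = 0 := by
  intro i
  induction i with
  | zero =>
      intro v
      constructor
      · intro hv
        rw [Wc, Submodule.mem_bot] at hv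
        subst hv
        exact ⟨Submodule.zero_mem _, fun l _ _ => Matrix.mulVec_zero _⟩
      · rintro ⟨hvV, hl⟩
        have := hl [] (by simp) rfl
        rw [List.prod_nil, Matrix.one_mulVec] at this
        rw [Wc, Submodule.mem_bot]
        exact this
  | succ i ih =>
      intro v
      rw [mem_Wc_succ]
      constructor
      · rintro ⟨hvV, hv⟩
        refine ⟨hvV, fun l hl hlen => ?_⟩
        rcases List.eq_nil_or_concat l with rfl | ⟨t, A, rfl⟩
        · simp at hlen
        · rw [List.concat_eq_append, List.prod_append, List.prod_singleton,
            ← Matrix.mulVec_mulVec]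
          have hA : A ∈ T := hl A (by simp)
          have ht : ∀ X ∈ t, X ∈ T := fun X hX => hl X (by simp [hX])
          have hAv := hv A hA
          rw [ih] at hAv
          exact hAv.2 t ht (by simpa using hlen)
      · rintro ⟨hvV, hl⟩
        refine ⟨hvV, fun A hA => ?_⟩
        rw [ih]
        refine ⟨mulVec_mem_Vsub (hT hA) hvV, fun t ht htlen => ?_⟩
        have := hl (t ++ [A]) (by
          intro X hX
          rcases List.mem_append.mp hX with h | h
          · exact ht X h
          · rw [List.mem_singleton.mp h]; exact hA) (by simp [htlen])
        rwa [List.prod_append, List.prod_singleton, ← Matrix.mulVec_mulVec] at this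

lemma Wc_cov {A : Mat n} (hA : A ∈ T) {m : ℕ} {x : Fin n → ℝ} (hx : x ∈ Wc T (m+1)) :
    A.mulVec x ∈ Wc T m := (mem_Wc_succ.mp hx).2 A hA

end WChain
section Stretch

open Module

variable {n k : ℕ} {T : Set (Mat n)}

/-- Stretch a weak covariant chain of length `j ≤ k` into a strict chain of length `k`. -/
lemma stretch (hTD : T ⊆ Dset n) (hkd : k ≤ finrank ℝ (Vsub n)) :
    ∀ (r j : ℕ), j + r = k →
    ∀ (U : ℕ → Submodule ℝ (Fin n → ℝ)), U 0 = ⊥ → (∀ m, j ≤ m → U m = Vsub n) →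
      Monotone U → (∀ m, m < j → U m < U (m+1)) →
      (∀ A ∈ T, ∀ m, ∀ x ∈ U (m+1), A.mulVec x ∈ U m) →
      ∃ C : Chain n k, T ⊆ TFn C.G := by
  intro r
  induction r with
  | zero =>
      intro j hj U hbot htop hmono hstrict hcov
      have hjk : j = k := by omega
      subst hjk
      refine ⟨⟨U, hbot, htop, hmono, hstrict⟩, fun A hA => ⟨hTD hA, fun m x hx => ?_⟩⟩
      exact hcov A hA m x hx
  | succ r ih =>
      intro j hj U hbot htop hmono hstrict hcov
      have hjk : j < k := by omega
      -- find a gap of size at least 2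
      have hfr : ¬ (∀ i, i < j → finrank ℝ (U (i+1)) ≤ finrank ℝ (U i) + 1) := by
        intro hgap
        have hle : ∀ m, m ≤ j → finrank ℝ (U m) ≤ m := by
          intro m
          induction m with
          | zero => intro _; rw [hbot]; simp
          | succ m ihm =>
              intro hm
              have := hgap m (by omega)
              have := ihm (by omega)
              omega
        have h1 := hle j le_rfl
        rw [htop j le_rfl] at h1
        omega
      push_neg at hfr
      obtain ⟨i, hij, hgap⟩ := hfr
      obtain ⟨x, hx1, hx2⟩ := SetLike.exists_of_lt (hstrict i hij)
      have hxne : x ≠ 0 := fun h => hx2 (h ▸ Submodule.zero_mem _)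
      set X : Submodule ℝ (Fin n → ℝ) := U i ⊔ (ℝ ∙ x) with hX
      have hUiX : U i < X := by
        refine lt_of_le_of_ne le_sup_left fun h => hx2 ?_
        rw [h]
        exact Submodule.mem_sup_right (Submodule.mem_span_singleton_self x)
      have hXle : X ≤ U (i+1) := by
        rw [hX, sup_le_iff]
        exact ⟨(hstrict i hij).le, (Submodule.span_singleton_le_iff_mem x _).mpr hx1⟩
      have hXlt : X < U (i+1) := by
        refine lt_of_le_of_ne hXle fun h => ?_
        have h1 : finrank ℝ X ≤ finrank ℝ (U i) + 1 := by
          calc finrank ℝ X ≤ finrank ℝ (U i) + finrank ℝ (ℝ ∙ x) :=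
                Submodule.finrank_add_le_finrank_add_finrank _ _
            _ = finrank ℝ (U i) + 1 := by rw [finrank_span_singleton hxne]
        rw [h] at h1
        omega
      set U' : ℕ → Submodule ℝ (Fin n → ℝ) :=
        fun m => if m ≤ i then U m else if m ≤ i + 1 then X else U (m-1) with hU'
      have e1 : ∀ m, m ≤ i → U' m = U m := fun m hm => by
        simp only [hU', if_pos hm]
      have e2 : U' (i+1) = X := by
        simp only [hU', if_neg (by omega : ¬ i + 1 ≤ i), if_pos (le_refl (i+1))]
      have e3 : ∀ m, i + 2 ≤ m → U' m = U (m-1) := fun m hm => by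
        simp only [hU', if_neg (by omega : ¬ m ≤ i), if_neg (by omega : ¬ m ≤ i + 1)]
      have hU'le : ∀ m, U' m ≤ U' (m+1) := by
        intro m
        rcases (by omega : m + 1 ≤ i ∨ m + 1 = i + 1 ∨ m + 1 = i + 2 ∨ i + 2 < m + 1)
          with h1 | h1 | h1 | h1
        · rw [e1 m (by omega), e1 (m+1) h1]; exact hmono (by omega)
        · rw [e1 m (by omega), h1, e2, show m = i by omega]; exact hUiX.le
        · rw [show m = i + 1 by omega, e2, e3 (i+1+1) (by omega),
            show i + 1 + 1 - 1 = i + 1 by omega]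
          exact hXle
        · rw [e3 m (by omega), e3 (m+1) (by omega)]
          exact hmono (by omega)
      refine ih (j+1) (by omega) U' ?_ ?_ (monotone_nat_of_le_succ hU'le) ?_ ?_
      · rw [e1 0 (by omega)]; exact hbot
      · intro m hm
        rw [e3 m (by omega)]
        exact htop (m-1) (by omega)
      · intro m hm
        rcases (by omega : m + 1 ≤ i ∨ m + 1 = i + 1 ∨ m + 1 = i + 2 ∨ i + 2 < m + 1)
          with h1 | h1 | h1 | h1
        · rw [e1 m (by omega), e1 (m+1) h1]; exact hstrict m (by omega)
        · rw [e1 m (by omega), h1, e2, show m = i by omega]; exact hUiX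
        · rw [show m = i + 1 by omega, e2, e3 (i+1+1) (by omega),
            show i + 1 + 1 - 1 = i + 1 by omega]
          exact hXlt
        · rw [e3 m (by omega), e3 (m+1) (by omega), show m + 1 - 1 = m - 1 + 1 by omega]
          exact hstrict (m-1) (by omega)
      · intro A hA m x' hx'
        rcases (by omega : m + 1 ≤ i ∨ m + 1 = i + 1 ∨ m + 1 = i + 2 ∨ i + 2 < m + 1)
          with h1 | h1 | h1 | h1
        · rw [e1 (m+1) h1] at hx'
          rw [e1 m (by omega)]
          exact hcov A hA m x' hx'
        · rw [h1, e2] at hx'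
          rw [e1 m (by omega), show m = i by omega]
          exact hcov A hA i x' (hXle hx')
        · rw [h1, e3 (i+2) le_rfl, show i + 2 - 1 = i + 1 by omega] at hx'
          rw [show m = i + 1 by omega, e2, hX]
          exact Submodule.mem_sup_left (hcov A hA i x' hx')
        · rw [e3 (m+1) (by omega), show m + 1 - 1 = m by omega] at hx'
          rw [e3 m (by omega)]
          have := hcov A hA (m-1) x' (by rwa [show m - 1 + 1 = m by omega])
          exact this

end Stretch
section Assemble

open Module

variable {n k : ℕ}

lemma exists_chain_of_nil (hn : 2 ≤ n) (hk1 : 1 ≤ k) (hkn : k ≤ n - 1) {T : Set (Mat n)}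
    (hTD : T ⊆ Dset n) (hnil : IsNilSubsg (On n) T) (hcls : nilClass (On n) T ≤ k) :
    ∃ C : Chain n k, T ⊆ TFn C.G := by
  have hfr : finrank ℝ (Vsub n) = n - 1 := finrank_Vsub (by omega)
  have hmem : nilClass (On n) T ∈ {c | 0 < c ∧ ProdEq (On n) T c} := by
    apply Nat.sInf_mem
    obtain ⟨k₀, h1, h2⟩ := hnil.2
    exact ⟨k₀, h1, h2⟩
  have hWcV : Wc T (nilClass (On n) T) = Vsub n := by
    apply le_antisymm (Wc_le_V _)
    intro v hv
    rw [Wc_char hTD]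
    exact ⟨hv, fun l hl hlen => by
      rw [prodEq_prod hmem.2 hl hlen hmem.1, On_mulVec hv]⟩
  haveI : DecidablePred fun i => Wc T i = Vsub n := fun _ => Classical.dec _
  have hex : ∃ i, Wc T i = Vsub n := ⟨_, hWcV⟩
  have hWc₀ : Wc T (Nat.find hex) = Vsub n := Nat.find_spec hex
  have hc₀c : Nat.find hex ≤ nilClass (On n) T := Nat.find_min' hex hWcV
  have hstrict : ∀ i, i < Nat.find hex → Wc T i < Wc T (i+1) := by
    intro i hi
    rcases lt_or_eq_of_le (Wc_le_succ i) with h | h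
    · exact h
    · exfalso
      refine Nat.find_min hex hi ?_
      rw [← Wc_stab h (Nat.find hex) (le_of_lt hi)]
      exact hWc₀
  have htop : ∀ m, Nat.find hex ≤ m → Wc T m = Vsub n := by
    intro m hm
    apply le_antisymm (Wc_le_V m)
    rw [← hWc₀]
    exact Wc_mono hm
  exact stretch hTD (by omega) (k - Nat.find hex) (Nat.find hex) (by omega) (Wc T) rfl
    htop Wc_mono hstrict (fun A hA m x hx => Wc_cov hA hx)

lemma nilClass_le_dim (hn : 2 ≤ n) {T : Set (Mat n)}
    (hTD : T ⊆ Dset n) (hnil : IsNilSubsg (On n) T) : nilClass (On n) T ≤ n - 1 := by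
  have hfr : finrank ℝ (Vsub n) = n - 1 := finrank_Vsub (by omega)
  have hmem : nilClass (On n) T ∈ {c | 0 < c ∧ ProdEq (On n) T c} := by
    apply Nat.sInf_mem
    obtain ⟨k₀, h1, h2⟩ := hnil.2
    exact ⟨k₀, h1, h2⟩
  have hWcV : Wc T (nilClass (On n) T) = Vsub n := by
    apply le_antisymm (Wc_le_V _)
    intro v hv
    rw [Wc_char hTD]
    exact ⟨hv, fun l hl hlen => by
      rw [prodEq_prod hmem.2 hl hlen hmem.1, On_mulVec hv]⟩
  haveI : DecidablePred fun i => Wc T i = Vsub n := fun _ => Classical.dec _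
  have hex : ∃ i, Wc T i = Vsub n := ⟨_, hWcV⟩
  have hWc₀ : Wc T (Nat.find hex) = Vsub n := Nat.find_spec hex
  have hstrict : ∀ i, i < Nat.find hex → Wc T i < Wc T (i+1) := by
    intro i hi
    rcases lt_or_eq_of_le (Wc_le_succ i) with h | h
    · exact h
    · exfalso
      refine Nat.find_min hex hi ?_
      rw [← Wc_stab h (Nat.find hex) (le_of_lt hi)]
      exact hWc₀
  have hrank : ∀ i, i ≤ Nat.find hex → i ≤ finrank ℝ (Wc T i) := by
    intro i
    induction i with
    | zero => intro _; exact Nat.zero_le _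
    | succ i ihi =>
        intro hi
        have h1 := ihi (by omega)
        have h2 := Submodule.finrank_lt_finrank_of_lt (hstrict i (by omega))
        omega
  have hc₀pos : 0 < Nat.find hex := by
    rcases Nat.eq_zero_or_pos (Nat.find hex) with h | h
    · exfalso
      have := hWc₀
      rw [h] at this
      have hb : (⊥ : Submodule ℝ (Fin n → ℝ)) = Vsub n := this
      have : finrank ℝ (Vsub n) = 0 := by rw [← hb]; exact finrank_bot ℝ _
      omega
    · exact h
  have hc₀d : Nat.find hex ≤ n - 1 := by
    have := hrank (Nat.find hex) le_rfl
    rw [hWc₀, hfr] at this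
    omega
  have hPc₀ : ProdEq (On n) T (Nat.find hex) := by
    intro a l ha hl hlen
    have hmemal : ∀ X ∈ a :: l, X ∈ T := by
      intro X hX
      rcases List.mem_cons.mp hX with h | h
      · exact h ▸ ha
      · exact hl X h
    rw [foldl_eq_prod]
    apply eq_On (by omega) (prod_mem_Dset (by simp) fun X hX => hTD (hmemal X hX))
    intro v hv
    have hvW : v ∈ Wc T (Nat.find hex) := by rw [hWc₀]; exact hv
    rw [Wc_char hTD] at hvW
    exact hvW.2 (a :: l) hmemal (by simp; omega)
  exact le_trans (Nat.sInf_le ⟨hc₀pos, hPc₀⟩) hc₀d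

lemma nilIn_iff_nilLe (hn : 2 ≤ n) (T : Set (Mat n)) :
    NilIn (On n) (Dset n) T ↔ NilLe (On n) (Dset n) (n - 1) T := by
  constructor
  · rintro ⟨h1, h2⟩
    exact ⟨h1, h2, nilClass_le_dim hn h1 h2⟩
  · rintro ⟨h1, h2, _⟩
    exact ⟨h1, h2⟩

end Assemble
section Main

variable {n k : ℕ}

lemma main_bijOn (hn : 2 ≤ n) (hk1 : 1 ≤ k) (hkn : k ≤ n - 1) :
    Set.BijOn
      (fun F : Fin (k + 1) → Submodule ℝ (Fin n → ℝ) =>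
        {A | A ∈ Dset n ∧ ∀ i : Fin k, ∀ x ∈ F i.succ, A.mulVec x ∈ F i.castSucc})
      {F | F 0 = ⊥ ∧ F (Fin.last k) = Vsub n ∧ StrictMono F}
      {T | Maximal (NilLe (On n) (Dset n) k) T} := by
  have hn0 : 0 < n := by omega
  have hk0 : 0 < k := by omega
  have hPhi : ∀ F : Fin (k + 1) → Submodule ℝ (Fin n → ℝ),
      {A | A ∈ Dset n ∧ ∀ i : Fin k, ∀ x ∈ F i.succ, A.mulVec x ∈ F i.castSucc} = Phi F :=
    fun _ => rfl
  refine ⟨?_, ?_, ?_⟩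
  · -- MapsTo
    rintro F ⟨h0, hlast, hmono⟩
    show Maximal (NilLe (On n) (Dset n) k) (Phi F)
    rw [phi_eq_TFn F h0 hlast hmono]
    exact (mkChain F h0 hlast hmono).tfn_maximal hn0 hk0
  · -- InjOn
    rintro F ⟨h0, hlast, hmono⟩ F' ⟨h0', hlast', hmono'⟩ heq
    simp only [hPhi] at heq
    have hTT : TFn (mkChain F h0 hlast hmono).G = TFn (mkChain F' h0' hlast' hmono').G := by
      rw [← phi_eq_TFn F h0 hlast hmono, ← phi_eq_TFn F' h0' hlast' hmono', heq]
    funext i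
    have hkey : (mkChain F h0 hlast hmono).G i.val = (mkChain F' h0' hlast' hmono').G i.val := by
      ext v
      rw [(mkChain F h0 hlast hmono).char hn0 (Nat.lt_succ_iff.mp i.isLt) v,
        (mkChain F' h0' hlast' hmono').char hn0 (Nat.lt_succ_iff.mp i.isLt) v, hTT]
    have hFi : ∀ (G : Fin (k+1) → Submodule ℝ (Fin n → ℝ)), chainOf G i.val = G i := by
      intro G
      show G _ = G i
      congr 1
      apply Fin.ext
      simp only [Nat.min_eq_left (Nat.lt_succ_iff.mp i.isLt)]
    rw [← hFi F, ← hFi F']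
    exact hkey
  · -- SurjOn
    rintro T hT
    obtain ⟨⟨hTD, hnil, hcls⟩, hTmax⟩ := hT
    obtain ⟨C, hTC⟩ := exists_chain_of_nil hn hk1 hkn hTD hnil hcls
    have hmax' := C.tfn_maximal hn0 hk0
    have hTeq : T = TFn C.G := le_antisymm hTC (hTmax hmax'.1 hTC)
    set F : Fin (k + 1) → Submodule ℝ (Fin n → ℝ) := fun i => C.G i.val with hF
    have h0 : F 0 = ⊥ := by
      simpa [hF] using C.bot
    have hlast : F (Fin.last k) = Vsub n := by
      simpa [hF, Fin.last] using C.top k le_rfl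
    have hmono : StrictMono F := by
      intro a b hab
      calc C.G a.val < C.G (a.val + 1) := C.strict a.val (by
            have := b.isLt
            have := (Fin.lt_iff_val_lt_val.mp hab)
            omega)
        _ ≤ C.G b.val := C.mono (by exact Fin.lt_iff_val_lt_val.mp hab)
    refine ⟨F, ⟨h0, hlast, hmono⟩, ?_⟩
    have hchain : chainOf F = C.G := by
      funext m
      show C.G (min m k) = C.G m
      rcases le_or_gt m k with h | h
      · rw [Nat.min_eq_left h]
      · rw [Nat.min_eq_right (by omega), C.top m (by omega), C.top k le_rfl]
    show Phi F = T
    rw [phi_eq_TFn F h0 hlast hmono]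
    show TFn (chainOf F) = T
    rw [hchain, hTeq]

end Main

/-- The map sending a flag `0 = V_0 ⊊ V_1 ⊊ ⋯ ⊊ V_k = V` of length
`k` in the hyperplane `V` of sum-zero vectors to
`{A ∈ D_n : A·V_i ⊆ V_{i-1} for all i}` is a bijection from the set of flags of
length `k` in `V` onto the set of maximal elements of `Nil_k(D_n)`. In particular,
the maximal nilpotent subsemigroups of `D_n` correspond bijectively to complete
flags (of length `n - 1`) in `V`. -/
theorem stmt18 (n k : ℕ) (hn : 2 ≤ n) (hk1 : 1 ≤ k) (hkn : k ≤ n - 1) :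
    Set.BijOn
        (fun V : Fin (k + 1) → Submodule ℝ (Fin n → ℝ) =>
          {A | A ∈ Dset n ∧ ∀ i : Fin k, ∀ x ∈ V i.succ, A.mulVec x ∈ V i.castSucc})
        {V | V 0 = ⊥ ∧ V (Fin.last k) = Vsub n ∧ StrictMono V}
        {T | Maximal (NilLe (On n) (Dset n) k) T} ∧
      Set.BijOn
        (fun V : Fin (n - 1 + 1) → Submodule ℝ (Fin n → ℝ) =>
          {A | A ∈ Dset n ∧ ∀ i : Fin (n - 1), ∀ x ∈ V i.succ, A.mulVec x ∈ V i.castSucc})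
        {V | V 0 = ⊥ ∧ V (Fin.last (n - 1)) = Vsub n ∧ StrictMono V}
        {T | Maximal (NilIn (On n) (Dset n)) T} := by
  constructor
  · exact main_bijOn hn hk1 hkn
  · have hset : {T | Maximal (NilIn (On n) (Dset n)) T} =
        {T | Maximal (NilLe (On n) (Dset n) (n - 1)) T} := by
      ext T
      simp only [Set.mem_setOf]
      constructor
      · rintro ⟨h1, h2⟩
        exact ⟨(nilIn_iff_nilLe hn T).mp h1,
          fun b hb hTb => h2 ((nilIn_iff_nilLe hn b).mpr hb) hTb⟩
      · rintro ⟨h1, h2⟩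
        exact ⟨(nilIn_iff_nilLe hn T).mpr h1,
          fun b hb hTb => h2 ((nilIn_iff_nilLe hn b).mp hb) hTb⟩
    rw [hset]
    exact main_bijOn hn (by omega) le_rfl

end NilSg
end
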